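/- arXiv:1811.12468 — 2 statements merged into one kernel-verified Lean document; each statement's English description precedes it below -/
import Mathlib

section
/- For every \alpha \in (0,1) and every p \in (0,1), the series \sum_{n=1}^{\infty} (1-\alpha)^n A_n p^n (1-p)^{n+2} converges and equals g_\alpha(p) = (1 - \sqrt{1 - 4(1-\alpha)p(1-p)})^3 / (8(1-\alpha)^2 p^2). -/
open Finset

lemma catalan_le_four_pow (n : ℕ) : catalan n ≤ 4 ^ n := by
  calc catalan n ≤ (n+1) * catalan n := Nat.le_mul_of_pos_left _ n.succ_pos
  _ = n.centralBinom := succ_mul_catalan_eq_centralBinom n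
  _ = (2*n).choose n := rfl
  _ ≤ (2*n+1).choose n := Nat.choose_le_choose n (Nat.le_succ _)
  _ ≤ 4 ^ n := Nat.choose_middle_le_pow n

lemma summable_cat {y : ℝ} (h0 : 0 ≤ y) (h1 : 4 * y < 1) :
    Summable (fun n : ℕ => (catalan n : ℝ) * y ^ n) := by
  refine Summable.of_nonneg_of_le (fun n => by positivity) (fun n => ?_)
    (summable_geometric_of_lt_one (by positivity) h1 : Summable fun n : ℕ => (4*y)^n)
  rw [mul_pow]
  apply mul_le_mul_of_nonneg_right _ (by positivity)
  exact_mod_cast (catalan_le_four_pow n).trans_eq (by norm_num)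

lemma norm_summable_cat {y : ℝ} (h0 : 0 ≤ y) (h1 : 4 * y < 1) :
    Summable (fun n : ℕ => ‖(catalan n : ℝ) * y ^ n‖) := by
  refine (summable_cat h0 h1).congr fun n => ?_
  rw [Real.norm_eq_abs, abs_of_nonneg (by positivity)]

lemma quad {y : ℝ} (h0 : 0 ≤ y) (h1 : 4 * y < 1) :
    y * (∑' n : ℕ, (catalan n : ℝ) * y ^ n) ^ 2
      = (∑' n : ℕ, (catalan n : ℝ) * y ^ n) - 1 := by
  set T := ∑' n : ℕ, (catalan n : ℝ) * y ^ n with hT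
  have hnorm := norm_summable_cat h0 h1
  have hmul := hasSum_sum_range_mul_of_summable_norm (R := ℝ) hnorm hnorm
  have hterm : ∀ n : ℕ, (∑ k ∈ Finset.range (n + 1),
      ((catalan k : ℝ) * y ^ k) * ((catalan (n - k) : ℝ) * y ^ (n - k)))
      = (catalan (n + 1) : ℝ) * y ^ n := by
    intro n
    rw [catalan_succ, Nat.cast_sum]
    rw [Fin.sum_univ_eq_sum_range (fun i => ((catalan i * catalan (n - i) : ℕ) : ℝ))]
    rw [Finset.sum_mul]
    refine Finset.sum_congr rfl fun k hk => ?_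
    have hk' : k ≤ n := Nat.lt_succ_iff.mp (Finset.mem_range.mp hk)
    push_cast
    rw [mul_mul_mul_comm, ← pow_add, Nat.add_sub_cancel' hk']
  rw [show (∑' n : ℕ, (catalan n : ℝ) * y ^ n) * ∑' n : ℕ, (catalan n : ℝ) * y ^ n
      = T ^ 2 by rw [sq]] at hmul
  have hmul2 : HasSum (fun n : ℕ => (catalan (n + 1) : ℝ) * y ^ n) (T ^ 2) :=
    hmul.congr_fun (fun n => (hterm n).symm)
  have hmul3 : HasSum (fun n : ℕ => (catalan (n + 1) : ℝ) * y ^ (n + 1)) (y * T ^ 2) := by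
    refine (hmul2.mul_left y).congr_fun fun n => ?_
    ring
  have hshift : HasSum (fun n : ℕ => (catalan (n + 1) : ℝ) * y ^ (n + 1)) (T - 1) := by
    have := (summable_cat h0 h1).hasSum
    rw [← hT] at this
    have h' := (hasSum_nat_add_iff' (f := fun n => (catalan n : ℝ) * y ^ n) 1).mpr this
    simpa using h'
  exact (hmul3.unique hshift)

lemma catGF {x : ℝ} (h0 : 0 < x) (h1 : 4 * x < 1) :
    HasSum (fun n : ℕ => (catalan n : ℝ) * x ^ n)
      ((1 - Real.sqrt (1 - 4 * x)) / (2 * x)) := by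
  set c : ℝ → ℝ := fun y => max 0 (min y x) with hc
  have hc_mem : ∀ y, 0 ≤ c y ∧ c y ≤ x := fun y =>
    ⟨le_max_left _ _, max_le (le_of_lt h0) (min_le_right _ _)⟩
  have hc_eq : ∀ y ∈ Set.Icc (0:ℝ) x, c y = y := by
    intro y hy
    simp only [hc]
    rw [min_eq_left hy.2, max_eq_right hy.1]
  set ψ : ℝ → ℝ := fun y => 2 * c y * (∑' n : ℕ, (catalan n : ℝ) * (c y) ^ n) - 1 with hψ
  have hcont : Continuous ψ := by
    have hccont : Continuous c := by fun_prop
    refine (Continuous.mul (by fun_prop) ?_).sub continuous_const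
    refine continuous_tsum (u := fun n : ℕ => (4 * x) ^ n)
      (fun n => by fun_prop) (summable_geometric_of_lt_one (by positivity) h1) ?_
    intro n y
    rw [Real.norm_eq_abs, abs_of_nonneg (by have := (hc_mem y).1; positivity)]
    show (catalan n : ℝ) * c y ^ n ≤ (4 * x) ^ n
    rw [mul_pow]
    refine mul_le_mul ?_ (pow_le_pow_left₀ (hc_mem y).1 (hc_mem y).2 n) (by positivity) (by positivity)
    exact_mod_cast (catalan_le_four_pow n).trans_eq (by norm_num)
  have hψsq : ∀ y ∈ Set.Icc (0:ℝ) x, ψ y ^ 2 = 1 - 4 * y := by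
    intro y hy
    have h4y : 4 * y < 1 := lt_of_le_of_lt (by linarith [hy.2]) h1
    have hq := quad hy.1 h4y
    simp only [hψ, hc_eq y hy]
    nlinarith [hq]
  have hψ0 : ψ 0 = -1 := by simp [hψ, hc]
  have hψx : ψ x < 0 := by
    by_contra hpos
    push_neg at hpos
    have hx_mem : x ∈ Set.Icc (0:ℝ) x := ⟨le_of_lt h0, le_rfl⟩
    have hne : ψ x ≠ 0 := by
      intro h
      have := hψsq x hx_mem
      rw [h] at this
      simp at this
      linarith
    have hlt : (0:ℝ) ∈ Set.Icc (ψ 0) (ψ x) := by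
      constructor
      · rw [hψ0]; linarith
      · exact lt_of_le_of_ne hpos (Ne.symm hne) |>.le
    obtain ⟨y, hy, hy0⟩ := intermediate_value_Icc (le_of_lt h0) hcont.continuousOn hlt
    have := hψsq y hy
    rw [hy0] at this
    simp at this
    have h4y : 4 * y < 1 := lt_of_le_of_lt (by linarith [hy.2]) h1
    linarith
  have hx_mem : x ∈ Set.Icc (0:ℝ) x := ⟨le_of_lt h0, le_rfl⟩
  have hs := hψsq x hx_mem
  have hsqrt : Real.sqrt (1 - 4 * x) = -(ψ x) := by
    rw [← hs, Real.sqrt_sq_eq_abs, abs_of_neg hψx]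
  set T := ∑' n : ℕ, (catalan n : ℝ) * x ^ n with hT
  have hψxval : ψ x = 2 * x * T - 1 := by
    simp only [hψ, hc_eq x hx_mem, hT]
  have hTval : T = (1 - Real.sqrt (1 - 4 * x)) / (2 * x) := by
    rw [hsqrt, hψxval]
    field_simp
    ring
  have := (summable_cat (le_of_lt h0) h1).hasSum
  rw [← hT, hTval] at this
  exact this

/-- `g α x` : the expected density after the epidemic stage on a percolated 3-tree. -/
noncomputable def g (α x : ℝ) : ℝ :=
  if x = 0 then 0
  else (1 - Real.sqrt (1 - 4 * (1 - α) * x * (1 - x))) ^ 3 / (8 * (1 - α) ^ 2 * x ^ 2)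

lemma tripleSum (n : ℕ) :
    ∑ k ∈ Finset.range (n + 1),
      (∑ i ∈ Finset.range (k + 1), (catalan i : ℝ) * catalan (k - i)) * (catalan (n - k) : ℝ)
    = ∑ i ∈ Finset.range (n + 1), ∑ j ∈ Finset.range (n + 1 - i),
        (catalan i : ℝ) * catalan j * catalan (n - i - j) := by
  simp_rw [Finset.sum_mul]
  rw [Finset.sum_sigma', Finset.sum_sigma']
  refine Finset.sum_nbij' (fun a => ⟨a.2, a.1 - a.2⟩) (fun a => ⟨a.1 + a.2, a.1⟩)
    ?_ ?_ ?_ ?_ ?_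
  · rintro ⟨k, i⟩ h
    simp only [Finset.mem_sigma, Finset.mem_range] at h ⊢
    omega
  · rintro ⟨i, j⟩ h
    simp only [Finset.mem_sigma, Finset.mem_range] at h ⊢
    omega
  · rintro ⟨k, i⟩ h
    simp only [Finset.mem_sigma, Finset.mem_range] at h
    have hik : i + (k - i) = k := by omega
    simp [hik]
  · rintro ⟨i, j⟩ h
    simp only [Finset.mem_sigma, Finset.mem_range] at h
    have hij : i + j - i = j := by omega
    simp [hij]
  · rintro ⟨k, i⟩ h
    simp only [Finset.mem_sigma, Finset.mem_range] at h
    have h1 : k - i ≤ k := Nat.sub_le _ _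
    have : n - i - (k - i) = n - k := by omega
    rw [this]

theorem stmt1 (A : ℕ → ℕ) (hA0 : A 0 = 1)
    (hA : ∀ n : ℕ, A (n + 1) =
      ∑ i ∈ Finset.range (n + 1), ∑ j ∈ Finset.range (n + 1 - i),
        catalan i * catalan j * catalan (n - i - j))
    (α p : ℝ) (hα : α ∈ Set.Ioo (0 : ℝ) 1) (hp : p ∈ Set.Ioo (0 : ℝ) 1) :
    HasSum (fun n : ℕ => (1 - α) ^ (n + 1) * (A (n + 1) : ℝ) * p ^ (n + 1) * (1 - p) ^ (n + 3))
      (g α p) := by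
  obtain ⟨hα0, hα1⟩ := hα
  obtain ⟨hp0, hp1⟩ := hp
  obtain ⟨x, hx⟩ : ∃ x : ℝ, x = (1 - α) * p * (1 - p) := ⟨_, rfl⟩
  have hx0 : 0 < x := by
    rw [hx]; apply mul_pos (mul_pos (by linarith) hp0) (by linarith)
  have hx1 : 4 * x < 1 := by rw [hx]; nlinarith [sq_nonneg (p - 1/2), mul_pos hp0 (show (0:ℝ) < 1 - p by linarith)]
  have hF := catGF hx0 hx1
  obtain ⟨s, hs⟩ : ∃ s : ℝ, s = Real.sqrt (1 - 4 * x) := ⟨_, rfl⟩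
  obtain ⟨T, hT⟩ : ∃ T : ℝ, T = (1 - s) / (2 * x) := ⟨_, rfl⟩
  rw [← hs, ← hT] at hF
  have hnorm := norm_summable_cat (le_of_lt hx0) hx1
  have h2 := hasSum_sum_range_mul_of_summable_norm (R := ℝ) hnorm hnorm
  rw [hF.tsum_eq, ← sq] at h2
  -- simplify terms of h2
  have hterm2 : ∀ n : ℕ, ∑ k ∈ Finset.range (n + 1),
      ((catalan k : ℝ) * x ^ k) * ((catalan (n - k) : ℝ) * x ^ (n - k))
      = (∑ k ∈ Finset.range (n + 1), (catalan k : ℝ) * catalan (n - k)) * x ^ n := by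
    intro n
    rw [Finset.sum_mul]
    refine Finset.sum_congr rfl fun k hk => ?_
    have hk' : k ≤ n := Nat.lt_succ_iff.mp (Finset.mem_range.mp hk)
    rw [mul_mul_mul_comm, ← pow_add, Nat.add_sub_cancel' hk']
  have h2' : HasSum (fun n : ℕ => (∑ k ∈ Finset.range (n + 1),
      (catalan k : ℝ) * catalan (n - k)) * x ^ n) (T ^ 2) :=
    h2.congr_fun (fun n => (hterm2 n).symm)
  have hnorm2 : Summable (fun n : ℕ => ‖(∑ k ∈ Finset.range (n + 1),
      (catalan k : ℝ) * catalan (n - k)) * x ^ n‖) := by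
    have hb : ∀ n : ℕ, (∑ k ∈ Finset.range (n + 1), (catalan k : ℝ) * catalan (n - k))
        = (catalan (n + 1) : ℝ) := by
      intro n
      rw [catalan_succ, Nat.cast_sum,
        Fin.sum_univ_eq_sum_range (fun i => ((catalan i * catalan (n - i) : ℕ) : ℝ))]
      push_cast
      rfl
    refine Summable.of_nonneg_of_le (fun n => norm_nonneg _) (fun n => ?_)
      ((summable_geometric_of_lt_one (by positivity) hx1 :
        Summable fun n : ℕ => (4 * x) ^ n).mul_left 4)
    rw [hb n, Real.norm_eq_abs, abs_of_nonneg (by positivity)]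
    calc (catalan (n + 1) : ℝ) * x ^ n ≤ (4 : ℝ) ^ (n + 1) * x ^ n := by
          apply mul_le_mul_of_nonneg_right _ (by positivity)
          exact_mod_cast (catalan_le_four_pow (n + 1)).trans_eq (by norm_num)
      _ = 4 * (4 * x) ^ n := by rw [mul_pow]; ring
  have h3 := hasSum_sum_range_mul_of_summable_norm (R := ℝ) hnorm2 hnorm
  rw [hF.tsum_eq, h2'.tsum_eq] at h3
  have hterm3 : ∀ n : ℕ, ∑ k ∈ Finset.range (n + 1),
      ((∑ i ∈ Finset.range (k + 1), (catalan i : ℝ) * catalan (k - i)) * x ^ k)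
        * ((catalan (n - k) : ℝ) * x ^ (n - k))
      = (A (n + 1) : ℝ) * x ^ n := by
    intro n
    have step1 : ∀ k ∈ Finset.range (n + 1),
        ((∑ i ∈ Finset.range (k + 1), (catalan i : ℝ) * catalan (k - i)) * x ^ k)
          * ((catalan (n - k) : ℝ) * x ^ (n - k))
        = ((∑ i ∈ Finset.range (k + 1), (catalan i : ℝ) * catalan (k - i))
            * (catalan (n - k) : ℝ)) * x ^ n := by
      intro k hk
      have hk' : k ≤ n := Nat.lt_succ_iff.mp (Finset.mem_range.mp hk)
      rw [mul_mul_mul_comm, ← pow_add, Nat.add_sub_cancel' hk']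
    rw [Finset.sum_congr rfl step1, ← Finset.sum_mul, tripleSum]
    congr 1
    rw [hA n]
    push_cast
    rfl
  have h4 : HasSum (fun n : ℕ => (A (n + 1) : ℝ) * x ^ n) (T ^ 2 * T) :=
    h3.congr_fun (fun n => (hterm3 n).symm)
  have h5 := h4.mul_left ((1 - p) ^ 2 * x)
  have h6 : HasSum
      (fun n : ℕ => (1 - α) ^ (n + 1) * (A (n + 1) : ℝ) * p ^ (n + 1) * (1 - p) ^ (n + 3))
      ((1 - p) ^ 2 * x * (T ^ 2 * T)) := by
    refine h5.congr_fun fun n => ?_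
    have hxpow : x ^ n = (1 - α) ^ n * p ^ n * (1 - p) ^ n := by
      rw [hx, mul_pow, mul_pow]
    rw [hxpow, hx]
    ring
  have hval : (1 - p) ^ 2 * x * (T ^ 2 * T) = g α p := by
    have hp_ne : p ≠ 0 := ne_of_gt hp0
    have hs_arg : 1 - 4 * (1 - α) * p * (1 - p) = 1 - 4 * x := by rw [hx]; ring
    rw [g, if_neg hp_ne, hs_arg, ← hs, hT]
    have hx_ne : x ≠ 0 := ne_of_gt hx0
    have h1p : (1 - p) ≠ 0 := by intro h; linarith [hp1]
    have h1α : (1 - α) ≠ 0 := by intro h; linarith [hα1]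
    field_simp
    rw [hx]
    ring
  rw [← hval]
  exact h6
end

section
/- Define the linearized map \bar{h}(p) = (\varphi_1 p_1 \psi(\beta_2 p_2),\, t(p_2)), where t(x) = g_{\alpha_2}(1 - e^{-\beta_2 x}) and \psi(x) = (1-e^{-x})/x with \psi(0)=1. Then for every fixed k \in \mathbb{N}, the ratio \bar{h}^k_1(p) / h^k_1(p) converges to 1 as p_1 \to 0^+, uniformly over p_2 \in [0, 1-p_1]. -/
/-- `ψ(x) = (1 - e^{-x})/x`, with `ψ(0) = 1`. -/
noncomputable def psi (x : ℝ) : ℝ := if x = 0 then 1 else (1 - Real.exp (-x)) / x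

/-- `Σ_p = β₁ p₁ + β₂ p₂`. -/
noncomputable def Sig (β₁ β₂ : ℝ) (p : ℝ × ℝ) : ℝ := β₁ * p.1 + β₂ * p.2

/-- Growth map, first type. -/
noncomputable def f1 (β₁ β₂ : ℝ) (p : ℝ × ℝ) : ℝ :=
  if Sig β₁ β₂ p = 0 then 0
  else (1 - Real.exp (-Sig β₁ β₂ p)) * (β₁ * p.1) / Sig β₁ β₂ p

/-- Growth map, second type. -/
noncomputable def f2 (β₁ β₂ : ℝ) (p : ℝ × ℝ) : ℝ :=
  if Sig β₁ β₂ p = 0 then 0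
  else (1 - Real.exp (-Sig β₁ β₂ p)) * (β₂ * p.2) / Sig β₁ β₂ p

/-- The two-type limiting map `h(p) = (g_{α₁}(f₁(p)), g_{α₂}(f₂(p)))`. -/
noncomputable def hmap (α₁ α₂ β₁ β₂ : ℝ) (p : ℝ × ℝ) : ℝ × ℝ :=
  (g α₁ (f1 β₁ β₂ p), g α₂ (f2 β₁ β₂ p))

/-- The linearized map `h̄(p) = (φ₁ p₁ ψ(β₂ p₂), t(p₂))` with `t(x) = g_{α₂}(1 - e^{-β₂ x})`. -/
noncomputable def hbar (α₁ α₂ β₁ β₂ : ℝ) (p : ℝ × ℝ) : ℝ × ℝ :=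
  ((1 - α₁) * β₁ * p.1 * psi (β₂ * p.2), g α₂ (1 - Real.exp (-(β₂ * p.2))))

/- ### auxiliary development -/


lemma psi_pos (x : ℝ) : 0 < psi x := by
  unfold psi
  rcases lt_trichotomy x 0 with hx | rfl | hx
  · rw [if_neg hx.ne]
    apply div_pos_of_neg_of_neg
    · have : 1 < Real.exp (-x) := by
        rw [Real.one_lt_exp_iff]; linarith
      linarith
    · exact hx
  · simp
  · rw [if_neg hx.ne']
    apply div_pos
    · have : Real.exp (-x) < 1 := by
        rw [Real.exp_lt_one_iff]; linarith
      linarith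
    · exact hx

lemma mul_psi (x : ℝ) : x * psi x = 1 - Real.exp (-x) := by
  unfold psi
  rcases eq_or_ne x 0 with rfl | hx
  · simp
  · rw [if_neg hx]; field_simp

lemma psi_continuous : Continuous psi := by
  rw [continuous_iff_continuousAt]
  intro x
  rcases eq_or_ne x 0 with rfl | hx
  · have hd : HasDerivAt (fun y : ℝ => 1 - Real.exp (-y)) 1 0 := by
      have h1 : HasDerivAt (fun y : ℝ => Real.exp (-y)) (Real.exp (-(0:ℝ)) * (-1)) 0 :=
        (hasDerivAt_neg (0:ℝ)).exp
      have h2 := h1.const_sub 1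
      simpa using h2
    have hslope := hasDerivAt_iff_tendsto_slope.mp hd
    have heq : ∀ y ∈ ({(0:ℝ)}ᶜ : Set ℝ), slope (fun y : ℝ => 1 - Real.exp (-y)) 0 y = psi y := by
      intro y hy
      have hy' : y ≠ 0 := hy
      simp only [slope, psi, if_neg hy', vsub_eq_sub, sub_zero]
      rw [div_eq_inv_mul]
      simp [Real.exp_zero, smul_eq_mul]
      try ring
    have h3 : Filter.Tendsto psi (nhdsWithin 0 {(0:ℝ)}ᶜ) (nhds 1) := by
      refine hslope.congr' ?_
      filter_upwards [self_mem_nhdsWithin] with y hy using heq y hy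
    have : ContinuousAt psi 0 := by
      rw [ContinuousAt]
      have : psi 0 = 1 := by simp [psi]
      rw [this]
      rw [← nhdsNE_sup_pure 0]
      rw [Filter.tendsto_sup]
      exact ⟨h3, by rw [Filter.tendsto_pure_left]; intro s hs; exact mem_of_mem_nhds (by simpa [psi] using hs)⟩
    exact this
  · have : ContinuousAt (fun y : ℝ => (1 - Real.exp (-y)) / y) x := by
      fun_prop (disch := assumption)
    apply this.congr
    filter_upwards [isOpen_compl_singleton.mem_nhds (by simpa using hx : x ∈ ({(0:ℝ)}ᶜ : Set ℝ))] with y hy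
    have hy' : y ≠ 0 := hy
    simp [psi, hy']

noncomputable def G (α x : ℝ) : ℝ :=
  8 * (1 - α) * (1 - x) ^ 3 / (1 + Real.sqrt (1 - 4 * (1 - α) * x * (1 - x))) ^ 3

lemma G_continuous (α : ℝ) : Continuous (G α) := by
  unfold G
  apply Continuous.div
  · fun_prop
  · fun_prop
  · intro x
    have h := Real.sqrt_nonneg (1 - 4 * (1 - α) * x * (1 - x))
    positivity

lemma G_zero (α : ℝ) : G α 0 = 1 - α := by
  unfold G
  norm_num [Real.sqrt_one]

lemma G_nonneg (α x : ℝ) (hα : α ≤ 1) (hx : x ≤ 1) : 0 ≤ G α x := by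
  unfold G
  have h := Real.sqrt_nonneg (1 - 4 * (1 - α) * x * (1 - x))
  have h1 : (0:ℝ) ≤ 1 - α := by linarith
  have h2 : (0:ℝ) ≤ 1 - x := by linarith
  positivity

lemma g_eq (α x : ℝ) (hα0 : 0 ≤ α) (hα1 : α < 1) (hx0 : 0 ≤ x) (hx1 : x ≤ 1) :
    g α x = x * G α x := by
  rcases eq_or_ne x 0 with rfl | hx
  · simp [g, G]
  · have hxpos : 0 < x := lt_of_le_of_ne hx0 (Ne.symm hx)
    have hu0 : 0 ≤ 4 * (1 - α) * x * (1 - x) := by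
      have : (0:ℝ) ≤ 1 - α := by linarith
      have : (0:ℝ) ≤ 1 - x := by linarith
      positivity
    have hu1 : 4 * (1 - α) * x * (1 - x) ≤ 1 := by
      nlinarith [sq_nonneg (1 - 2*x), mul_nonneg hx0 (by linarith : (0:ℝ) ≤ 1 - x)]
    set s := Real.sqrt (1 - 4 * (1 - α) * x * (1 - x)) with hs
    have hs0 : 0 ≤ s := Real.sqrt_nonneg _
    have hssq : s ^ 2 = 1 - 4 * (1 - α) * x * (1 - x) := Real.sq_sqrt (by linarith)
    have hden : (0:ℝ) < 1 + s := by linarith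
    have hα' : (0:ℝ) < 1 - α := by linarith
    rw [g, if_neg hx, G, mul_div_assoc']
    rw [div_eq_div_iff (by positivity) (by positivity)]
    have key : (1 - s) * (1 + s) = 4 * (1 - α) * x * (1 - x) := by nlinarith [hssq]
    have key3 : ((1 - s) * (1 + s)) ^ 3 = (4 * (1 - α) * x * (1 - x)) ^ 3 := by rw [key]
    linear_combination key3

noncomputable def F1 (β₁ β₂ : ℝ) (p : ℝ × ℝ) : ℝ := β₁ * p.1 * psi (Sig β₁ β₂ p)
noncomputable def F2 (β₁ β₂ : ℝ) (p : ℝ × ℝ) : ℝ := β₂ * p.2 * psi (Sig β₁ β₂ p)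

noncomputable def HH (α₁ α₂ β₁ β₂ : ℝ) (p : ℝ × ℝ) : ℝ × ℝ :=
  (F1 β₁ β₂ p * G α₁ (F1 β₁ β₂ p), F2 β₁ β₂ p * G α₂ (F2 β₁ β₂ p))

noncomputable def HB (α₁ α₂ β₁ β₂ : ℝ) (p : ℝ × ℝ) : ℝ × ℝ :=
  ((1 - α₁) * β₁ * p.1 * psi (β₂ * p.2),
   (1 - Real.exp (-(β₂ * p.2))) * G α₂ (1 - Real.exp (-(β₂ * p.2))))

noncomputable def afun (α₁ β₁ β₂ : ℝ) (p : ℝ × ℝ) : ℝ :=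
  β₁ * psi (Sig β₁ β₂ p) * G α₁ (F1 β₁ β₂ p)

noncomputable def bfun (α₁ β₁ β₂ : ℝ) (p : ℝ × ℝ) : ℝ := (1 - α₁) * β₁ * psi (β₂ * p.2)

section Main

variable {α₁ α₂ β₁ β₂ : ℝ}

lemma exp_aux (y : ℝ) (hy : 0 ≤ y) : 0 ≤ 1 - Real.exp (-y) ∧ 1 - Real.exp (-y) ≤ 1 := by
  constructor
  · have : Real.exp (-y) ≤ 1 := Real.exp_le_one_iff.mpr (by linarith)
    linarith
  · have := Real.exp_pos (-y); linarith

lemma F1_mem (hβ₁ : 0 < β₁) (hβ₂ : 0 < β₂) {p : ℝ × ℝ} (h1 : 0 ≤ p.1) (h2 : 0 ≤ p.2) :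
    0 ≤ F1 β₁ β₂ p ∧ F1 β₁ β₂ p ≤ 1 := by
  have hψ := psi_pos (Sig β₁ β₂ p)
  constructor
  · exact mul_nonneg (mul_nonneg hβ₁.le h1) hψ.le
  · have hle : β₁ * p.1 ≤ Sig β₁ β₂ p := by
      unfold Sig; nlinarith
    calc F1 β₁ β₂ p ≤ Sig β₁ β₂ p * psi (Sig β₁ β₂ p) :=
          mul_le_mul_of_nonneg_right hle hψ.le
    _ = 1 - Real.exp (-(Sig β₁ β₂ p)) := mul_psi _
    _ ≤ 1 := (exp_aux _ (by unfold Sig; nlinarith)).2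

lemma F2_mem (hβ₁ : 0 < β₁) (hβ₂ : 0 < β₂) {p : ℝ × ℝ} (h1 : 0 ≤ p.1) (h2 : 0 ≤ p.2) :
    0 ≤ F2 β₁ β₂ p ∧ F2 β₁ β₂ p ≤ 1 := by
  have hψ := psi_pos (Sig β₁ β₂ p)
  constructor
  · exact mul_nonneg (mul_nonneg hβ₂.le h2) hψ.le
  · have hle : β₂ * p.2 ≤ Sig β₁ β₂ p := by
      unfold Sig; nlinarith
    calc F2 β₁ β₂ p ≤ Sig β₁ β₂ p * psi (Sig β₁ β₂ p) :=
          mul_le_mul_of_nonneg_right hle hψ.le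
    _ = 1 - Real.exp (-(Sig β₁ β₂ p)) := mul_psi _
    _ ≤ 1 := (exp_aux _ (by unfold Sig; nlinarith)).2

lemma f1_eq (hβ₁ : 0 < β₁) (hβ₂ : 0 < β₂) {p : ℝ × ℝ} (h1 : 0 ≤ p.1) (h2 : 0 ≤ p.2) :
    f1 β₁ β₂ p = F1 β₁ β₂ p := by
  unfold f1 F1
  rcases eq_or_ne (Sig β₁ β₂ p) 0 with hS | hS
  · rw [if_pos hS]
    have hp1 : p.1 = 0 := by
      have := hS; unfold Sig at this; nlinarith
    rw [hp1]; ring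
  · rw [if_neg hS]
    unfold psi
    rw [if_neg hS]
    field_simp

lemma f2_eq (hβ₁ : 0 < β₁) (hβ₂ : 0 < β₂) {p : ℝ × ℝ} (h1 : 0 ≤ p.1) (h2 : 0 ≤ p.2) :
    f2 β₁ β₂ p = F2 β₁ β₂ p := by
  unfold f2 F2
  rcases eq_or_ne (Sig β₁ β₂ p) 0 with hS | hS
  · rw [if_pos hS]
    have hp2 : p.2 = 0 := by
      have := hS; unfold Sig at this; nlinarith
    rw [hp2]; ring
  · rw [if_neg hS]
    unfold psi
    rw [if_neg hS]
    field_simp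

lemma hmap_eq_HH (hα₁ : α₁ ∈ Set.Ico (0:ℝ) 1) (hα₂ : α₂ ∈ Set.Ico (0:ℝ) 1)
    (hβ₁ : 0 < β₁) (hβ₂ : 0 < β₂) {p : ℝ × ℝ} (h1 : 0 ≤ p.1) (h2 : 0 ≤ p.2) :
    hmap α₁ α₂ β₁ β₂ p = HH α₁ α₂ β₁ β₂ p := by
  obtain ⟨hF10, hF11⟩ := F1_mem hβ₁ hβ₂ h1 h2
  obtain ⟨hF20, hF21⟩ := F2_mem hβ₁ hβ₂ h1 h2
  unfold hmap HH
  rw [f1_eq hβ₁ hβ₂ h1 h2, f2_eq hβ₁ hβ₂ h1 h2,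
    g_eq α₁ _ hα₁.1 hα₁.2 hF10 hF11, g_eq α₂ _ hα₂.1 hα₂.2 hF20 hF21]

lemma HH_mem (hα₁ : α₁ ∈ Set.Ico (0:ℝ) 1) (hα₂ : α₂ ∈ Set.Ico (0:ℝ) 1)
    (hβ₁ : 0 < β₁) (hβ₂ : 0 < β₂) {p : ℝ × ℝ} (h1 : 0 ≤ p.1) (h2 : 0 ≤ p.2) :
    0 ≤ (HH α₁ α₂ β₁ β₂ p).1 ∧ 0 ≤ (HH α₁ α₂ β₁ β₂ p).2 := by
  obtain ⟨hF10, hF11⟩ := F1_mem hβ₁ hβ₂ h1 h2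
  obtain ⟨hF20, hF21⟩ := F2_mem hβ₁ hβ₂ h1 h2
  exact ⟨mul_nonneg hF10 (G_nonneg _ _ hα₁.2.le hF11),
    mul_nonneg hF20 (G_nonneg _ _ hα₂.2.le hF21)⟩

lemma HB_mem (hα₁ : α₁ ∈ Set.Ico (0:ℝ) 1) (hα₂ : α₂ ∈ Set.Ico (0:ℝ) 1)
    (hβ₁ : 0 < β₁) (hβ₂ : 0 < β₂) {p : ℝ × ℝ} (h1 : 0 ≤ p.1) (h2 : 0 ≤ p.2) :
    0 ≤ (HB α₁ α₂ β₁ β₂ p).1 ∧ 0 ≤ (HB α₁ α₂ β₁ β₂ p).2 := by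
  obtain ⟨he0, he1⟩ := exp_aux (β₂ * p.2) (by positivity)
  refine ⟨?_, mul_nonneg he0 (G_nonneg _ _ hα₂.2.le he1)⟩
  show 0 ≤ (1 - α₁) * β₁ * p.1 * psi (β₂ * p.2)
  have := (psi_pos (β₂ * p.2)).le
  have h1α : (0:ℝ) ≤ 1 - α₁ := by have := hα₁.2; linarith
  positivity

lemma hbar_eq_HB (hα₂ : α₂ ∈ Set.Ico (0:ℝ) 1) (hβ₂ : 0 < β₂)
    {p : ℝ × ℝ} (h2 : 0 ≤ p.2) :
    hbar α₁ α₂ β₁ β₂ p = HB α₁ α₂ β₁ β₂ p := by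
  obtain ⟨he0, he1⟩ := exp_aux (β₂ * p.2) (by positivity)
  unfold hbar HB
  rw [g_eq α₂ _ hα₂.1 hα₂.2 he0 he1]

lemma hmap_iter_eq (hα₁ : α₁ ∈ Set.Ico (0:ℝ) 1) (hα₂ : α₂ ∈ Set.Ico (0:ℝ) 1)
    (hβ₁ : 0 < β₁) (hβ₂ : 0 < β₂) {p : ℝ × ℝ} (h1 : 0 ≤ p.1) (h2 : 0 ≤ p.2) (k : ℕ) :
    (hmap α₁ α₂ β₁ β₂)^[k] p = (HH α₁ α₂ β₁ β₂)^[k] p ∧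
      0 ≤ ((HH α₁ α₂ β₁ β₂)^[k] p).1 ∧ 0 ≤ ((HH α₁ α₂ β₁ β₂)^[k] p).2 := by
  induction k with
  | zero => exact ⟨rfl, h1, h2⟩
  | succ n ih =>
    obtain ⟨heq, hm1, hm2⟩ := ih
    rw [Function.iterate_succ_apply', Function.iterate_succ_apply', heq]
    exact ⟨hmap_eq_HH hα₁ hα₂ hβ₁ hβ₂ hm1 hm2, HH_mem hα₁ hα₂ hβ₁ hβ₂ hm1 hm2⟩

lemma hbar_iter_eq (hα₁ : α₁ ∈ Set.Ico (0:ℝ) 1) (hα₂ : α₂ ∈ Set.Ico (0:ℝ) 1)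
    (hβ₁ : 0 < β₁) (hβ₂ : 0 < β₂) {p : ℝ × ℝ} (h1 : 0 ≤ p.1) (h2 : 0 ≤ p.2) (k : ℕ) :
    (hbar α₁ α₂ β₁ β₂)^[k] p = (HB α₁ α₂ β₁ β₂)^[k] p ∧
      0 ≤ ((HB α₁ α₂ β₁ β₂)^[k] p).1 ∧ 0 ≤ ((HB α₁ α₂ β₁ β₂)^[k] p).2 := by
  induction k with
  | zero => exact ⟨rfl, h1, h2⟩
  | succ n ih =>
    obtain ⟨heq, hm1, hm2⟩ := ih
    rw [Function.iterate_succ_apply', Function.iterate_succ_apply', heq]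
    exact ⟨hbar_eq_HB hα₂ hβ₂ hm2, HB_mem hα₁ hα₂ hβ₁ hβ₂ hm1 hm2⟩

lemma HH_fst (p : ℝ × ℝ) : (HH α₁ α₂ β₁ β₂ p).1 = p.1 * afun α₁ β₁ β₂ p := by
  unfold HH afun F1; dsimp only; ring

lemma HB_fst (p : ℝ × ℝ) : (HB α₁ α₂ β₁ β₂ p).1 = p.1 * bfun α₁ β₁ β₂ p := by
  unfold HB bfun; dsimp only; ring

lemma HH_iter_fst (p : ℝ × ℝ) (k : ℕ) :
    ((HH α₁ α₂ β₁ β₂)^[k] p).1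
      = p.1 * ∏ j ∈ Finset.range k, afun α₁ β₁ β₂ ((HH α₁ α₂ β₁ β₂)^[j] p) := by
  induction k with
  | zero => simp
  | succ n ih =>
    rw [Function.iterate_succ_apply', HH_fst, ih, Finset.prod_range_succ]
    ring

lemma HB_iter_fst (p : ℝ × ℝ) (k : ℕ) :
    ((HB α₁ α₂ β₁ β₂)^[k] p).1
      = p.1 * ∏ j ∈ Finset.range k, bfun α₁ β₁ β₂ ((HB α₁ α₂ β₁ β₂)^[j] p) := by
  induction k with
  | zero => simp
  | succ n ih =>
    rw [Function.iterate_succ_apply', HB_fst, ih, Finset.prod_range_succ]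
    ring

lemma slice_eq (hβ₁ : 0 < β₁) {p : ℝ × ℝ} (hp : p.1 = 0) :
    HH α₁ α₂ β₁ β₂ p = HB α₁ α₂ β₁ β₂ p := by
  have hSig : Sig β₁ β₂ p = β₂ * p.2 := by unfold Sig; rw [hp]; ring
  have hF1 : F1 β₁ β₂ p = 0 := by unfold F1; rw [hp]; ring
  have hF2 : F2 β₁ β₂ p = 1 - Real.exp (-(β₂ * p.2)) := by
    unfold F2; rw [hSig, mul_psi]
  unfold HH HB
  rw [hF1, hF2, hp]
  norm_num

lemma afun_eq_bfun (hβ₁ : 0 < β₁) {p : ℝ × ℝ} (hp : p.1 = 0) :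
    afun α₁ β₁ β₂ p = bfun α₁ β₁ β₂ p := by
  have hSig : Sig β₁ β₂ p = β₂ * p.2 := by unfold Sig; rw [hp]; ring
  have hF1 : F1 β₁ β₂ p = 0 := by unfold F1; rw [hp]; ring
  unfold afun bfun
  rw [hSig, hF1, G_zero]
  ring

lemma iter_slice (hβ₁ : 0 < β₁) {p : ℝ × ℝ} (hp : p.1 = 0) (k : ℕ) :
    (HH α₁ α₂ β₁ β₂)^[k] p = (HB α₁ α₂ β₁ β₂)^[k] p ∧
      ((HB α₁ α₂ β₁ β₂)^[k] p).1 = 0 := by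
  induction k with
  | zero => exact ⟨rfl, hp⟩
  | succ n ih =>
    obtain ⟨heq, hz⟩ := ih
    rw [Function.iterate_succ_apply', Function.iterate_succ_apply', heq]
    refine ⟨slice_eq hβ₁ hz, ?_⟩
    rw [HB_fst, hz]; ring

lemma HH_continuous : Continuous (HH α₁ α₂ β₁ β₂) := by
  have hS : Continuous (Sig β₁ β₂) := by unfold Sig; fun_prop
  have hF1 : Continuous (F1 β₁ β₂) := by
    unfold F1; exact (continuous_const.mul continuous_fst).mul (psi_continuous.comp hS)
  have hF2 : Continuous (F2 β₁ β₂) := by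
    unfold F2; exact (continuous_const.mul continuous_snd).mul (psi_continuous.comp hS)
  unfold HH
  exact (hF1.mul ((G_continuous α₁).comp hF1)).prodMk (hF2.mul ((G_continuous α₂).comp hF2))

lemma HB_continuous : Continuous (HB α₁ α₂ β₁ β₂) := by
  have he : Continuous (fun p : ℝ × ℝ => 1 - Real.exp (-(β₂ * p.2))) := by fun_prop
  unfold HB
  exact ((continuous_const.mul continuous_fst).mul
    (psi_continuous.comp (continuous_const.mul continuous_snd))).prodMk
    (he.mul ((G_continuous α₂).comp he))

lemma afun_continuous : Continuous (afun α₁ β₁ β₂) := by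
  have hS : Continuous (Sig β₁ β₂) := by unfold Sig; fun_prop
  have hF1 : Continuous (F1 β₁ β₂) := by
    unfold F1; exact (continuous_const.mul continuous_fst).mul (psi_continuous.comp hS)
  unfold afun
  exact (continuous_const.mul (psi_continuous.comp hS)).mul ((G_continuous α₁).comp hF1)

lemma bfun_continuous : Continuous (bfun α₁ β₁ β₂) := by
  unfold bfun
  exact continuous_const.mul (psi_continuous.comp (continuous_const.mul continuous_snd))

lemma bfun_pos (hα₁ : α₁ ∈ Set.Ico (0:ℝ) 1) (hβ₁ : 0 < β₁) (p : ℝ × ℝ) :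
    0 < bfun α₁ β₁ β₂ p := by
  unfold bfun
  have h1 : (0:ℝ) < 1 - α₁ := by have := hα₁.2; linarith
  exact mul_pos (mul_pos h1 hβ₁) (psi_pos _)

end Main

theorem stmt10 (α₁ α₂ β₁ β₂ : ℝ)
    (hα₁ : α₁ ∈ Set.Ico (0 : ℝ) 1) (hα₂ : α₂ ∈ Set.Ico (0 : ℝ) 1)
    (hβ₁ : 0 < β₁) (hβ₂ : 0 < β₂) (k : ℕ) :
    ∀ ε : ℝ, 0 < ε → ∃ δ : ℝ, 0 < δ ∧
      ∀ p₁ p₂ : ℝ, 0 < p₁ → p₁ < δ → 0 ≤ p₂ → p₂ ≤ 1 - p₁ →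
        |((hbar α₁ α₂ β₁ β₂)^[k] (p₁, p₂)).1 / ((hmap α₁ α₂ β₁ β₂)^[k] (p₁, p₂)).1 - 1| < ε := by

  intro ε hε
  classical
  set A : ℝ × ℝ → ℝ :=
    fun p => ∏ j ∈ Finset.range k, afun α₁ β₁ β₂ ((HH α₁ α₂ β₁ β₂)^[j] p) with hA
  set B : ℝ × ℝ → ℝ :=
    fun p => ∏ j ∈ Finset.range k, bfun α₁ β₁ β₂ ((HB α₁ α₂ β₁ β₂)^[j] p) with hB
  have hAcont : Continuous A := by
    apply continuous_finset_prod
    intro j _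
    exact afun_continuous.comp (HH_continuous.iterate j)
  have hBcont : Continuous B := by
    apply continuous_finset_prod
    intro j _
    exact bfun_continuous.comp (HB_continuous.iterate j)
  have hAB0 : ∀ q : ℝ, A (0, q) = B (0, q) := by
    intro q
    apply Finset.prod_congr rfl
    intro j _
    have hs := iter_slice (α₁ := α₁) (α₂ := α₂) (β₂ := β₂) hβ₁ (p := ((0:ℝ), q)) rfl j
    rw [hs.1, afun_eq_bfun hβ₁ hs.2]
  have hBpos : ∀ p, 0 < B p := fun p => Finset.prod_pos (fun j _ => bfun_pos hα₁ hβ₁ _)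
  obtain ⟨q₀, hq₀, hmin⟩ := isCompact_Icc.exists_isMinOn (Set.nonempty_Icc.mpr zero_le_one)
      ((hBcont.comp (Continuous.prodMk continuous_const continuous_id)).continuousOn :
        ContinuousOn (fun q : ℝ => B (0, q)) (Set.Icc 0 1))
  set c := B (0, q₀) with hc
  have hcpos : 0 < c := hBpos _
  set K := (Set.Icc (0:ℝ) 1) ×ˢ (Set.Icc (0:ℝ) 1) with hK
  have hKc : IsCompact K := isCompact_Icc.prod isCompact_Icc
  set η := min (c/2) (ε*c/8) with hη
  have hηpos : 0 < η := lt_min (by linarith) (by positivity)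
  have hAu := hKc.uniformContinuousOn_of_continuous hAcont.continuousOn
  have hBu := hKc.uniformContinuousOn_of_continuous hBcont.continuousOn
  rw [Metric.uniformContinuousOn_iff] at hAu hBu
  obtain ⟨δA, hδA, hA'⟩ := hAu η hηpos
  obtain ⟨δB, hδB, hB'⟩ := hBu η hηpos
  refine ⟨min 1 (min δA δB), lt_min one_pos (lt_min hδA hδB), ?_⟩
  intro p₁ p₂ hp₁ hp₁δ hp₂ hp₂'
  have hp₁1 : p₁ ≤ 1 := le_of_lt (lt_of_lt_of_le hp₁δ (min_le_left _ _))
  have hp₂1 : p₂ ≤ 1 := by linarith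
  have hmemp : ((p₁ : ℝ), p₂) ∈ K := by
    rw [hK]
    exact Set.mk_mem_prod (Set.mem_Icc.mpr ⟨hp₁.le, hp₁1⟩) (Set.mem_Icc.mpr ⟨hp₂, hp₂1⟩)
  have hmem0 : ((0 : ℝ), p₂) ∈ K := by
    rw [hK]
    exact Set.mk_mem_prod (Set.mem_Icc.mpr ⟨le_refl 0, zero_le_one⟩) (Set.mem_Icc.mpr ⟨hp₂, hp₂1⟩)
  have hdist : dist ((p₁ : ℝ), p₂) ((0:ℝ), p₂) = p₁ := by
    rw [Prod.dist_eq]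
    simp [Real.dist_eq, abs_of_pos hp₁, hp₁.le]
  have hdA : |A (p₁, p₂) - A (0, p₂)| < η := by
    have := hA' _ hmemp _ hmem0 (by
      rw [hdist]
      exact lt_of_lt_of_le hp₁δ (le_trans (min_le_right _ _) (min_le_left _ _)))
    rwa [Real.dist_eq] at this
  have hdB : |B (p₁, p₂) - B (0, p₂)| < η := by
    have := hB' _ hmemp _ hmem0 (by
      rw [hdist]
      exact lt_of_lt_of_le hp₁δ (le_trans (min_le_right _ _) (min_le_right _ _)))
    rwa [Real.dist_eq] at this
  have hcle : c ≤ B (0, p₂) := isMinOn_iff.mp hmin p₂ (Set.mem_Icc.mpr ⟨hp₂, hp₂1⟩)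
  obtain ⟨hdA1, hdA2⟩ := abs_lt.mp hdA
  obtain ⟨hdB1, hdB2⟩ := abs_lt.mp hdB
  have hη1 : η ≤ c/2 := min_le_left _ _
  have hη2 : η ≤ ε*c/8 := min_le_right _ _
  have hA0B0 := hAB0 p₂
  have hApos : 0 < A (p₁, p₂) := by nlinarith
  -- rewrite goal
  have hmapeq := (hmap_iter_eq hα₁ hα₂ hβ₁ hβ₂ (p := ((p₁ : ℝ), p₂)) hp₁.le hp₂ k).1
  have hbareq := (hbar_iter_eq hα₁ hα₂ hβ₁ hβ₂ (p := ((p₁ : ℝ), p₂)) hp₁.le hp₂ k).1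
  rw [hmapeq, hbareq, HH_iter_fst, HB_iter_fst]
  rw [show (∏ j ∈ Finset.range k, afun α₁ β₁ β₂ ((HH α₁ α₂ β₁ β₂)^[j] (p₁, p₂)))
      = A (p₁, p₂) from rfl,
    show (∏ j ∈ Finset.range k, bfun α₁ β₁ β₂ ((HB α₁ α₂ β₁ β₂)^[j] (p₁, p₂)))
      = B (p₁, p₂) from rfl]
  rw [show ((p₁ : ℝ), p₂).1 = p₁ from rfl]
  rw [mul_div_mul_left _ _ (ne_of_gt hp₁)]
  rw [div_sub_one (ne_of_gt hApos), abs_div, abs_of_pos hApos, div_lt_iff₀ hApos]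
  rw [abs_lt]
  constructor <;> nlinarith
end
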